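/- The closed ball of radius s = (Σ_{k=1}^m 1/(√k + √(k−1))²)^{-1/2} centered at the origin is contained in C_m = conv(B_m). -/

import Mathlib

open scoped BigOperators
noncomputable section

def A (m : ℕ) : Set (EuclideanSpace ℝ (Fin m)) :=
  {v | (∀ i, v i = -1 ∨ v i = 0 ∨ v i = 1) ∧ v ≠ 0}

def B (m : ℕ) : Set (EuclideanSpace ℝ (Fin m)) :=
  (fun v => ‖v‖⁻¹ • v) '' A m

open Finset in
lemma aux_sign (x : ℝ) : x * Real.sign x = |x| := by
  rcases lt_trichotomy x 0 with h|h|h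
  · rw [Real.sign_of_neg h, abs_of_neg h]; ring
  · simp [h]
  · rw [Real.sign_of_pos h, abs_of_pos h]; ring

lemma aux_core (m : ℕ) (hm : 1 ≤ m) (a : ℕ → ℝ) (ha0 : ∀ k, 0 ≤ a k)
    (hmono : ∀ i, i + 1 < m → a (i + 1) ≤ a i) (c : ℝ) (hc : 0 < c)
    (hsum : ∑ k ∈ Finset.range m, a k ^ 2 = c ^ 2) :
    ∃ k < m,
      (Real.sqrt (∑ k ∈ Finset.range m, 1 / (Real.sqrt (k + 1) + Real.sqrt k) ^ 2))⁻¹ * c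
        * Real.sqrt ((k : ℝ) + 1) ≤ ∑ j ∈ Finset.range (k + 1), a j := by
  set T : ℝ := ∑ k ∈ Finset.range m, 1 / (Real.sqrt (k + 1) + Real.sqrt k) ^ 2 with hTdef
  set d : ℕ → ℝ := fun n => Real.sqrt ((n : ℝ) + 1) - Real.sqrt (n : ℝ) with hddef
  have hd0 : ∀ n, 0 ≤ d n := by
    intro n
    have : Real.sqrt (n : ℝ) ≤ Real.sqrt ((n : ℝ) + 1) := Real.sqrt_le_sqrt (by linarith)
    simp only [hddef]; linarith
  have hspos : ∀ n : ℕ, 0 < Real.sqrt ((n : ℝ) + 1) + Real.sqrt (n : ℝ) := by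
    intro n
    have h1 : 0 < Real.sqrt ((n : ℝ) + 1) := Real.sqrt_pos.2 (by positivity)
    have h2 : 0 ≤ Real.sqrt (n : ℝ) := Real.sqrt_nonneg _
    linarith
  have hdsq : ∀ n : ℕ, d n ^ 2 = 1 / (Real.sqrt ((n : ℝ) + 1) + Real.sqrt (n : ℝ)) ^ 2 := by
    intro n
    have h1 : (Real.sqrt ((n : ℝ) + 1) - Real.sqrt (n : ℝ))
        * (Real.sqrt ((n : ℝ) + 1) + Real.sqrt (n : ℝ)) = 1 := by
      have e1 : Real.sqrt ((n : ℝ) + 1) ^ 2 = (n : ℝ) + 1 := Real.sq_sqrt (by positivity)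
      have e2 : Real.sqrt (n : ℝ) ^ 2 = (n : ℝ) := Real.sq_sqrt (by positivity)
      nlinarith [e1, e2]
    have h2 := hspos n
    have h3 : d n = 1 / (Real.sqrt ((n : ℝ) + 1) + Real.sqrt (n : ℝ)) := by
      rw [hddef]
      field_simp
      linarith [h1]
    rw [h3, div_pow, one_pow]
  have hT : ∑ k ∈ Finset.range m, d k ^ 2 = T := by
    rw [hTdef]; exact Finset.sum_congr rfl fun k _ => hdsq k
  have hT1 : (1 : ℝ) ≤ T := by
    have h0m : 0 ∈ Finset.range m := Finset.mem_range.2 (by omega)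
    rw [hTdef]
    calc (1 : ℝ) = 1 / (Real.sqrt (((0:ℕ) : ℝ) + 1) + Real.sqrt ((0 : ℕ) : ℝ)) ^ 2 := by
          norm_num
    _ ≤ ∑ k ∈ Finset.range m, 1 / (Real.sqrt (k + 1) + Real.sqrt k) ^ 2 :=
        Finset.single_le_sum (f := fun k : ℕ => 1 / (Real.sqrt (k + 1) + Real.sqrt k) ^ 2)
          (fun k _ => by positivity) h0m
  have hsT : (1 : ℝ) ≤ Real.sqrt T := by
    rw [show (1:ℝ) = Real.sqrt 1 by simp]
    exact Real.sqrt_le_sqrt hT1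
  have hsTpos : 0 < Real.sqrt T := by linarith
  set s : ℝ := (Real.sqrt T)⁻¹ with hsdef
  have hspos' : 0 < s := inv_pos.2 hsTpos
  by_contra hcon
  push_neg at hcon
  obtain ⟨k0, hk0m, hk0max⟩ := Finset.exists_max_image (Finset.range m)
    (fun k => (∑ j ∈ Finset.range (k + 1), a j) / Real.sqrt ((k : ℝ) + 1))
    ⟨0, Finset.mem_range.2 (by omega)⟩
  set t : ℝ := (∑ j ∈ Finset.range (k0 + 1), a j) / Real.sqrt ((k0 : ℝ) + 1) with htdef
  have hsqpos : ∀ k : ℕ, 0 < Real.sqrt ((k : ℝ) + 1) := fun k => Real.sqrt_pos.2 (by positivity)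
  have hb : ∀ k, k < m → ∑ j ∈ Finset.range (k + 1), a j ≤ t * Real.sqrt ((k : ℝ) + 1) := by
    intro k hk
    have h := hk0max k (Finset.mem_range.2 hk)
    rw [div_le_iff₀ (hsqpos k)] at h
    linarith [h]
  have htpos : 0 < t := by
    have hc2 : (∑ k ∈ Finset.range m, a k ^ 2) ≠ 0 := by rw [hsum]; positivity
    obtain ⟨j, hjm, hj⟩ := Finset.exists_ne_zero_of_sum_ne_zero hc2
    have haj : 0 < a j := by
      rcases (ha0 j).lt_or_eq with h|h
      · exact h
      · exact absurd (by rw [← h]; ring) hj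
    have hSj : a j ≤ ∑ i ∈ Finset.range (j + 1), a i :=
      Finset.single_le_sum (fun i _ => ha0 i) (Finset.self_mem_range_succ j)
    have h1 : 0 < (∑ i ∈ Finset.range (j + 1), a i) / Real.sqrt ((j : ℝ) + 1) :=
      div_pos (by linarith) (hsqpos j)
    exact lt_of_lt_of_le h1 (hk0max j hjm)
  have htlt : t < s * c := by
    have h1 := hcon k0 (Finset.mem_range.1 hk0m)
    rw [htdef, div_lt_iff₀ (hsqpos k0)]
    linarith [h1]
  have eq1 := Finset.sum_range_by_parts a a m
  have eq2 := Finset.sum_range_by_parts a d m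
  simp only [smul_eq_mul] at eq1 eq2
  have htel : ∀ n : ℕ, ∑ j ∈ Finset.range n, d j = Real.sqrt (n : ℝ) := by
    intro n
    have h := Finset.sum_range_sub (fun i : ℕ => Real.sqrt (i : ℝ)) n
    simp only [Nat.cast_zero, Real.sqrt_zero, sub_zero] at h
    rw [← h]
    refine Finset.sum_congr rfl fun j _ => ?_
    simp only [hddef]
    push_cast
    ring_nf
  simp only [htel] at eq2
  push_cast at eq2
  have hm1 : m - 1 + 1 = m := Nat.succ_pred_eq_of_pos hm
  have hcast : ((m - 1 : ℕ) : ℝ) + 1 = (m : ℝ) := by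
    rw [Nat.cast_sub hm]; push_cast; ring
  have hSm : ∑ j ∈ Finset.range m, a j ≤ t * Real.sqrt (m : ℝ) := by
    have h := hb (m - 1) (by omega)
    rw [hm1, hcast] at h
    exact h
  have h1 : a (m - 1) * ∑ j ∈ Finset.range m, a j
      ≤ t * (a (m - 1) * Real.sqrt (m : ℝ)) := by
    calc a (m - 1) * ∑ j ∈ Finset.range m, a j
        ≤ a (m - 1) * (t * Real.sqrt (m : ℝ)) :=
          mul_le_mul_of_nonneg_left hSm (ha0 _)
      _ = t * (a (m - 1) * Real.sqrt (m : ℝ)) := by ring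
  have h2 : t * (∑ i ∈ Finset.range (m - 1), (a (i + 1) - a i) * Real.sqrt ((i : ℝ) + 1))
      ≤ ∑ i ∈ Finset.range (m - 1), (a (i + 1) - a i) * ∑ j ∈ Finset.range (i + 1), a j := by
    rw [Finset.mul_sum]
    apply Finset.sum_le_sum
    intro i hi
    have him : i < m - 1 := Finset.mem_range.1 hi
    have hle : a (i + 1) - a i ≤ 0 := sub_nonpos.2 (hmono i (by omega))
    have hSi := hb i (by omega)
    calc t * ((a (i + 1) - a i) * Real.sqrt ((i : ℝ) + 1))
        = (a (i + 1) - a i) * (t * Real.sqrt ((i : ℝ) + 1)) := by ring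
      _ ≤ (a (i + 1) - a i) * ∑ j ∈ Finset.range (i + 1), a j :=
          mul_le_mul_of_nonpos_left hSi hle
  have e0 : ∑ k ∈ Finset.range m, a k * a k = c ^ 2 := by
    rw [← hsum]; exact Finset.sum_congr rfl fun k _ => (pow_two (a k)).symm
  have e1 : c ^ 2 = a (m - 1) * ∑ j ∈ Finset.range m, a j
      - ∑ i ∈ Finset.range (m - 1), (a (i + 1) - a i) * ∑ j ∈ Finset.range (i + 1), a j := by
    rw [← e0]; exact eq1
  have e2 : t * ∑ k ∈ Finset.range m, a k * d k
      = t * (a (m - 1) * Real.sqrt (m : ℝ))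
        - t * ∑ i ∈ Finset.range (m - 1), (a (i + 1) - a i) * Real.sqrt ((i : ℝ) + 1) := by
    rw [eq2]; ring
  have hmain : c ^ 2 ≤ t * ∑ k ∈ Finset.range m, a k * d k := by
    rw [e1, e2]; linarith [h1, h2]
  -- Cauchy-Schwarz
  have hcs : ∑ k ∈ Finset.range m, a k * d k ≤ c * Real.sqrt T := by
    have hnn : 0 ≤ ∑ k ∈ Finset.range m, a k * d k :=
      Finset.sum_nonneg fun k _ => mul_nonneg (ha0 k) (hd0 k)
    have hsq : (∑ k ∈ Finset.range m, a k * d k) ^ 2 ≤ c ^ 2 * T := by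
      calc (∑ k ∈ Finset.range m, a k * d k) ^ 2
          ≤ (∑ k ∈ Finset.range m, a k ^ 2) * ∑ k ∈ Finset.range m, d k ^ 2 :=
            Finset.sum_mul_sq_le_sq_mul_sq _ _ _
        _ = c ^ 2 * T := by rw [hsum, hT]
    have h3 : ∑ k ∈ Finset.range m, a k * d k
        = Real.sqrt ((∑ k ∈ Finset.range m, a k * d k) ^ 2) := (Real.sqrt_sq hnn).symm
    rw [h3]
    calc Real.sqrt ((∑ k ∈ Finset.range m, a k * d k) ^ 2)
        ≤ Real.sqrt (c ^ 2 * T) := Real.sqrt_le_sqrt hsq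
      _ = c * Real.sqrt T := by
          rw [Real.sqrt_mul (by positivity), Real.sqrt_sq hc.le]
  have hX : 0 < c * Real.sqrt T := mul_pos hc hsTpos
  have hfin : t * ∑ k ∈ Finset.range m, a k * d k < c ^ 2 := by
    calc t * ∑ k ∈ Finset.range m, a k * d k
        ≤ t * (c * Real.sqrt T) := mul_le_mul_of_nonneg_left hcs htpos.le
      _ < (s * c) * (c * Real.sqrt T) := by
          exact mul_lt_mul_of_pos_right htlt hX
      _ = c ^ 2 * (s * Real.sqrt T) := by ring
      _ = c ^ 2 := by
          rw [hsdef, inv_mul_cancel₀ (ne_of_gt hsTpos), mul_one]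
  linarith [hmain, hfin]

lemma aux_key (m : ℕ) (hm : 2 ≤ m) (y : EuclideanSpace ℝ (Fin m)) (hy : y ≠ 0) :
    ∃ b ∈ B m,
      (Real.sqrt (∑ k ∈ Finset.range m, 1 / (Real.sqrt (k + 1) + Real.sqrt k) ^ 2))⁻¹ * ‖y‖
        ≤ (inner ℝ y b : ℝ) := by
  set s : ℝ :=
    (Real.sqrt (∑ k ∈ Finset.range m, 1 / (Real.sqrt (k + 1) + Real.sqrt k) ^ 2))⁻¹ with hsdef
  have hs0 : 0 ≤ s := inv_nonneg.2 (Real.sqrt_nonneg _)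
  set σ := Tuple.sort (fun i : Fin m => -|y i|) with hσ
  have hsort := Tuple.monotone_sort (fun i : Fin m => -|y i|)
  set a : ℕ → ℝ := fun k => if h : k < m then |y (σ ⟨k, h⟩)| else 0 with hadef
  have ha0 : ∀ k, 0 ≤ a k := by
    intro k; rw [hadef]; dsimp only; split
    · exact abs_nonneg _
    · exact le_refl _
  have haval : ∀ (j : ℕ) (hj : j < m), a j = |y (σ ⟨j, hj⟩)| := by
    intro j hj; rw [hadef]; simp [hj]
  have hmono' : ∀ (i j : ℕ) (hi : i < m) (hj : j < m), i ≤ j → a j ≤ a i := by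
    intro i j hi hj hij
    have h := hsort (a := (⟨i, hi⟩ : Fin m)) (b := ⟨j, hj⟩) hij
    simp only [Function.comp_apply] at h
    rw [haval i hi, haval j hj]
    linarith [h]
  have hmono : ∀ i, i + 1 < m → a (i + 1) ≤ a i :=
    fun i h => hmono' i (i + 1) (by omega) h (by omega)
  have hc : 0 < ‖y‖ := norm_pos_iff.2 hy
  have hsum : ∑ k ∈ Finset.range m, a k ^ 2 = ‖y‖ ^ 2 := by
    have h1 : ∑ k ∈ Finset.range m, a k ^ 2 = ∑ j : Fin m, a (j : ℕ) ^ 2 :=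
      (Fin.sum_univ_eq_sum_range (fun k => a k ^ 2) m).symm
    have h2 : ∀ j : Fin m, a (j : ℕ) = |y (σ j)| := by
      intro j; rw [haval _ j.isLt]
    have h3 : ∑ j : Fin m, |y (σ j)| ^ 2 = ∑ j : Fin m, |y j| ^ 2 :=
      Equiv.sum_comp σ (fun j => |y j| ^ 2)
    have h4 : ‖y‖ ^ 2 = ∑ i : Fin m, |y i| ^ 2 := by
      rw [EuclideanSpace.norm_eq, Real.sq_sqrt (by positivity)]
      exact Finset.sum_congr rfl fun i _ => by rw [Real.norm_eq_abs]
    rw [h1, h4, ← h3]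
    exact Finset.sum_congr rfl fun j _ => by rw [h2 j]
  obtain ⟨k, hk, hS⟩ := aux_core m (by omega) a ha0 hmono ‖y‖ hc hsum
  -- a 0 > 0
  have ha0pos : 0 < a 0 := by
    have hc2 : (∑ k ∈ Finset.range m, a k ^ 2) ≠ 0 := by rw [hsum]; positivity
    obtain ⟨j, hjm, hj⟩ := Finset.exists_ne_zero_of_sum_ne_zero hc2
    have haj : 0 < a j := by
      rcases (ha0 j).lt_or_eq with h|h
      · exact h
      · exact absurd (by rw [← h]; ring) hj
    exact lt_of_lt_of_le haj (hmono' 0 j (by omega) (Finset.mem_range.1 hjm) (by omega))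
  have h0m : 0 < m := by omega
  have hyσ0 : y (σ ⟨0, h0m⟩) ≠ 0 := by
    intro h
    rw [haval 0 h0m, h, abs_zero] at ha0pos
    exact lt_irrefl 0 ha0pos
  set v : EuclideanSpace ℝ (Fin m) :=
    WithLp.toLp 2 (fun i => if ((σ.symm i : ℕ) ≤ k) then Real.sign (y i) else 0) with hvdef
  have hvapp : ∀ i, v i = if ((σ.symm i : ℕ) ≤ k) then Real.sign (y i) else 0 := fun i => rfl
  have hvA : v ∈ A m := by
    constructor
    · intro i
      rw [hvapp i]
      by_cases hcond : ((σ.symm i : ℕ) ≤ k)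
      · rw [if_pos hcond]
        rcases lt_trichotomy (y i) 0 with h|h|h
        · exact Or.inl (Real.sign_of_neg h)
        · exact Or.inr (Or.inl (by rw [h, Real.sign_zero]))
        · exact Or.inr (Or.inr (Real.sign_of_pos h))
      · exact Or.inr (Or.inl (if_neg hcond))
    · intro h0
      have h1 : v (σ ⟨0, h0m⟩) = 0 := by rw [h0]; rfl
      rw [hvapp, Equiv.symm_apply_apply] at h1
      simp only [Fin.val_mk, Nat.zero_le, if_true] at h1
      exact hyσ0 (Real.sign_eq_zero_iff.1 h1)
  have hvne : v ≠ 0 := hvA.2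
  have hvpos : 0 < ‖v‖ := norm_pos_iff.2 hvne
  have hfilter : (Finset.range m).filter (· ≤ k) = Finset.range (k + 1) := by
    ext n
    simp only [Finset.mem_filter, Finset.mem_range]
    omega
  have hinner : (inner ℝ y v : ℝ) = ∑ j ∈ Finset.range (k + 1), a j := by
    rw [PiLp.inner_apply]
    simp only [RCLike.inner_apply, starRingEnd_apply, star_trivial]
    have e1 : ∀ i : Fin m, y i * v i
        = (fun j : Fin m => if ((j : ℕ) ≤ k) then |y (σ j)| else 0) (σ.symm i) := by
      intro i
      rw [hvapp i]
      dsimp only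
      by_cases hcond : ((σ.symm i : ℕ) ≤ k)
      · rw [if_pos hcond, if_pos hcond, Equiv.apply_symm_apply, aux_sign]
      · rw [if_neg hcond, if_neg hcond, mul_zero]
    rw [Finset.sum_congr rfl fun i _ => (mul_comm _ _).trans (e1 i)]
    rw [Equiv.sum_comp σ.symm (fun j : Fin m => if ((j : ℕ) ≤ k) then |y (σ j)| else 0)]
    have e2 : ∀ j : Fin m, (if ((j : ℕ) ≤ k) then |y (σ j)| else 0)
        = (fun n : ℕ => if n ≤ k then a n else 0) (j : ℕ) := by
      intro j
      dsimp only
      by_cases hcond : ((j : ℕ) ≤ k)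
      · rw [if_pos hcond, if_pos hcond, haval _ j.isLt]
      · rw [if_neg hcond, if_neg hcond]
    rw [Finset.sum_congr rfl fun j _ => e2 j,
      Fin.sum_univ_eq_sum_range (fun n : ℕ => if n ≤ k then a n else 0) m,
      ← Finset.sum_filter, hfilter]
  have hnormv : ‖v‖ ≤ Real.sqrt ((k : ℝ) + 1) := by
    rw [EuclideanSpace.norm_eq]
    apply Real.sqrt_le_sqrt
    have e1 : ∀ i : Fin m, ‖v i‖ ^ 2
        ≤ (fun j : Fin m => if ((j : ℕ) ≤ k) then (1 : ℝ) else 0) (σ.symm i) := by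
      intro i
      rw [hvapp i]
      dsimp only
      by_cases hcond : ((σ.symm i : ℕ) ≤ k)
      · rw [if_pos hcond, if_pos hcond, Real.norm_eq_abs, sq_abs]
        rcases lt_trichotomy (y i) 0 with h|h|h
        · rw [Real.sign_of_neg h]; norm_num
        · rw [h, Real.sign_zero]; norm_num
        · rw [Real.sign_of_pos h]; norm_num
      · rw [if_neg hcond, if_neg hcond, norm_zero]; norm_num
    calc ∑ i : Fin m, ‖v i‖ ^ 2
        ≤ ∑ i : Fin m, (fun j : Fin m => if ((j : ℕ) ≤ k) then (1 : ℝ) else 0) (σ.symm i) :=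
          Finset.sum_le_sum fun i _ => e1 i
      _ = ∑ j : Fin m, (if ((j : ℕ) ≤ k) then (1 : ℝ) else 0) :=
          Equiv.sum_comp σ.symm (fun j : Fin m => if ((j : ℕ) ≤ k) then (1 : ℝ) else 0)
      _ = ∑ n ∈ Finset.range m, (if n ≤ k then (1 : ℝ) else 0) :=
          Fin.sum_univ_eq_sum_range (fun n : ℕ => if n ≤ k then (1 : ℝ) else 0) m
      _ = ∑ n ∈ Finset.range (k + 1), (1 : ℝ) := by rw [← Finset.sum_filter, hfilter]
      _ = (k : ℝ) + 1 := by simp [Finset.sum_const]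
  refine ⟨‖v‖⁻¹ • v, ⟨v, hvA, rfl⟩, ?_⟩
  rw [real_inner_smul_right, hinner]
  have hsk : 0 < Real.sqrt ((k : ℝ) + 1) := Real.sqrt_pos.2 (by positivity)
  have hS0 : 0 ≤ ∑ j ∈ Finset.range (k + 1), a j :=
    Finset.sum_nonneg fun j _ => ha0 j
  have h1 : (Real.sqrt ((k : ℝ) + 1))⁻¹ ≤ ‖v‖⁻¹ := by
    apply inv_anti₀ hvpos hnormv
  have h3 : s * ‖y‖ * Real.sqrt ((k : ℝ) + 1) * (Real.sqrt ((k : ℝ) + 1))⁻¹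
      ≤ (∑ j ∈ Finset.range (k + 1), a j) * (Real.sqrt ((k : ℝ) + 1))⁻¹ :=
    mul_le_mul_of_nonneg_right hS (inv_nonneg.2 hsk.le)
  have h2 : s * ‖y‖ * Real.sqrt ((k : ℝ) + 1) * (Real.sqrt ((k : ℝ) + 1))⁻¹ = s * ‖y‖ := by
    field_simp
  have h4 : (∑ j ∈ Finset.range (k + 1), a j) * (Real.sqrt ((k : ℝ) + 1))⁻¹
      ≤ (∑ j ∈ Finset.range (k + 1), a j) * ‖v‖⁻¹ :=
    mul_le_mul_of_nonneg_left h1 hS0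
  have h5 : (∑ j ∈ Finset.range (k + 1), a j) * ‖v‖⁻¹
      = ‖v‖⁻¹ * ∑ j ∈ Finset.range (k + 1), a j := mul_comm _ _
  linarith [h2, h3, h4]

theorem stmt19 (m : ℕ) (hm : 2 ≤ m) :
    Metric.closedBall (0 : EuclideanSpace ℝ (Fin m))
        ((Real.sqrt (∑ k ∈ Finset.range m, 1 / (Real.sqrt (k + 1) + Real.sqrt k) ^ 2))⁻¹)
      ⊆ convexHull ℝ (B m) := by
  set s : ℝ :=
    (Real.sqrt (∑ k ∈ Finset.range m, 1 / (Real.sqrt (k + 1) + Real.sqrt k) ^ 2))⁻¹ with hsdef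
  intro x hx
  rw [Metric.mem_closedBall, dist_zero_right] at hx
  have hAfin : (A m).Finite := by
    have hsub : A m ⊆ WithLp.ofLp ⁻¹' Set.pi Set.univ (fun _ : Fin m => ({-1, 0, 1} : Set ℝ)) := by
      intro v hv i _
      rcases hv.1 i with h|h|h <;> simp [h]
    exact Set.Finite.subset
      ((Set.Finite.pi fun _ => Set.toFinite ({-1, 0, 1} : Set ℝ)).preimage (WithLp.ofLp_injective 2).injOn) hsub
  have hBfin : (B m).Finite := hAfin.image _
  have hCclosed : IsClosed (convexHull ℝ (B m)) := (hBfin.isCompact_convexHull ℝ).isClosed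
  by_contra hxC
  obtain ⟨f, u, hfa, hfx⟩ :=
    geometric_hahn_banach_closed_point (convex_convexHull ℝ (B m)) hCclosed hxC
  set y := (InnerProductSpace.toDual ℝ (EuclideanSpace ℝ (Fin m))).symm f with hydef
  have hyz : ∀ z, (inner ℝ y z : ℝ) = f z := fun z => InnerProductSpace.toDual_symm_apply
  have h0m : (0 : ℕ) < m := by omega
  set e : EuclideanSpace ℝ (Fin m) := EuclideanSpace.single ⟨0, h0m⟩ (1 : ℝ) with hedef
  have heA : e ∈ A m := by
    constructor
    · intro i
      rw [hedef, EuclideanSpace.single_apply]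
      by_cases h : i = ⟨0, h0m⟩
      · rw [if_pos h]; exact Or.inr (Or.inr rfl)
      · rw [if_neg h]; exact Or.inr (Or.inl rfl)
    · intro h0
      have h1 : e ⟨0, h0m⟩ = 0 := by rw [h0]; rfl
      rw [hedef, EuclideanSpace.single_apply, if_pos rfl] at h1
      exact one_ne_zero h1
  have hbB : ‖e‖⁻¹ • e ∈ B m := ⟨e, heA, rfl⟩
  have hyne : y ≠ 0 := by
    intro h0
    have h1 := hfa _ (subset_convexHull ℝ (B m) hbB)
    have h2 : f (‖e‖⁻¹ • e) = 0 := by rw [← hyz, h0, inner_zero_left]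
    have h3 : f x = 0 := by rw [← hyz, h0, inner_zero_left]
    rw [h2] at h1
    rw [h3] at hfx
    linarith
  obtain ⟨b, hbBm, hkey⟩ := aux_key m hm y hyne
  have h4 : f b < u := hfa b (subset_convexHull ℝ (B m) hbBm)
  have h5 : (inner ℝ y x : ℝ) ≤ ‖y‖ * ‖x‖ := real_inner_le_norm y x
  have h6 : ‖y‖ * ‖x‖ ≤ ‖y‖ * s := mul_le_mul_of_nonneg_left hx (norm_nonneg y)
  have h7 := hyz b
  have h8 := hyz x
  have h9 : s * ‖y‖ = ‖y‖ * s := mul_comm _ _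
  linarith [hkey, h4, hfx, h5, h6]
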